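/- If V₁ and V₂ are S-equivalent square integer matrices, then σ(V₂ + V₂ᵀ) = σ(V₁ + V₁ᵀ), i.e. the signature of the symmetrization is an invariant of S-equivalence. -/

import Mathlib

open Matrix

/-- The signature of a real symmetric (= Hermitian) matrix: the number of positive
eigenvalues minus the number of negative eigenvalues, counted with multiplicity.
(Defined to be `0` on non-symmetric matrices.) -/
noncomputable def signature {n : Type*} [Fintype n] [DecidableEq n]
    (A : Matrix n n ℝ) : ℤ :=
  if hA : A.IsHermitian then
    ((Finset.univ.filter fun i => 0 < hA.eigenvalues i).card : ℤ) -
    ((Finset.univ.filter fun i => hA.eigenvalues i < 0).card : ℤ)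
  else 0

/-- The row-type elementary enlargement `W = [[V, 0, 0], [a, 0, 0], [0, 1, 0]]`,
as an `(n+2) × (n+2)` matrix. -/
def rowEnlarge {n : ℕ} (V : Matrix (Fin n) (Fin n) ℤ) (a : Fin n → ℤ) :
    Matrix (Fin (n + 2)) (Fin (n + 2)) ℤ :=
  Matrix.reindex finSumFinEquiv finSumFinEquiv
    (Matrix.fromBlocks V 0
      (Matrix.of fun (i : Fin 2) (j : Fin n) => if i = 0 then a j else 0)
      !![0, 0; 1, 0])

/-- The column-type elementary enlargement `W = [[V, b, 0], [0, 0, 1], [0, 0, 0]]`,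
as an `(n+2) × (n+2)` matrix. -/
def colEnlarge {n : ℕ} (V : Matrix (Fin n) (Fin n) ℤ) (b : Fin n → ℤ) :
    Matrix (Fin (n + 2)) (Fin (n + 2)) ℤ :=
  Matrix.reindex finSumFinEquiv finSumFinEquiv
    (Matrix.fromBlocks V
      (Matrix.of fun (i : Fin n) (j : Fin 2) => if j = 0 then b i else 0)
      0
      !![0, 1; 0, 0])

/-- A single step of S-equivalence: unimodular congruence, or an elementary
enlargement (row- or column-type). Elementary reductions are the reverses of
elementary enlargements. -/
inductive SStep : (Σ n : ℕ, Matrix (Fin n) (Fin n) ℤ) →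
    (Σ n : ℕ, Matrix (Fin n) (Fin n) ℤ) → Prop
  | unimodular {n : ℕ} (V P : Matrix (Fin n) (Fin n) ℤ)
      (hP : P.det = 1 ∨ P.det = -1) : SStep ⟨n, V⟩ ⟨n, P * V * Pᵀ⟩
  | row {n : ℕ} (V : Matrix (Fin n) (Fin n) ℤ) (a : Fin n → ℤ) :
      SStep ⟨n, V⟩ ⟨n + 2, rowEnlarge V a⟩
  | col {n : ℕ} (V : Matrix (Fin n) (Fin n) ℤ) (b : Fin n → ℤ) :
      SStep ⟨n, V⟩ ⟨n + 2, colEnlarge V b⟩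

/-- S-equivalence of square integer matrices: the equivalence relation generated by
unimodular congruence and elementary enlargements/reductions. -/
def SEquiv : (Σ n : ℕ, Matrix (Fin n) (Fin n) ℤ) →
    (Σ n : ℕ, Matrix (Fin n) (Fin n) ℤ) → Prop :=
  Relation.EqvGen SStep


section SigAux

open Module Submodule

variable {ι : Type*} [Fintype ι] [DecidableEq ι] {κ : Type*} [Fintype κ] [DecidableEq κ]

/-- The quadratic form of a matrix. -/
def QF (A : Matrix ι ι ℝ) (x : ι → ℝ) : ℝ := x ⬝ᵥ (A *ᵥ x)

@[simp] lemma QF_zero (A : Matrix ι ι ℝ) : QF A 0 = 0 := by simp [QF]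

lemma dot_sum {γ : Type*} (x : ι → ℝ) (s : Finset γ) (f : γ → ι → ℝ) :
    x ⬝ᵥ (∑ k ∈ s, f k) = ∑ k ∈ s, x ⬝ᵥ f k := by
  simp only [dotProduct, Finset.sum_apply, Finset.mul_sum]
  rw [Finset.sum_comm]

lemma mulVec_sum' {γ : Type*} (A : Matrix ι ι ℝ) (s : Finset γ) (f : γ → ι → ℝ) :
    A *ᵥ (∑ k ∈ s, f k) = ∑ k ∈ s, A *ᵥ f k :=
  map_sum A.mulVecLin f s

def PosOn (A : Matrix ι ι ℝ) (W : Submodule ℝ (ι → ℝ)) : Prop :=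
  ∀ x ∈ W, x ≠ 0 → 0 < QF A x

def NegOn (A : Matrix ι ι ℝ) (W : Submodule ℝ (ι → ℝ)) : Prop :=
  ∀ x ∈ W, x ≠ 0 → QF A x < 0

def NonposOn (A : Matrix ι ι ℝ) (W : Submodule ℝ (ι → ℝ)) : Prop :=
  ∀ x ∈ W, QF A x ≤ 0

def NonnegOn (A : Matrix ι ι ℝ) (W : Submodule ℝ (ι → ℝ)) : Prop :=
  ∀ x ∈ W, 0 ≤ QF A x

lemma NegOn.nonposOn {A : Matrix ι ι ℝ} {W} (h : NegOn A W) : NonposOn A W := by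
  intro x hx
  by_cases h0 : x = 0
  · simp [h0]
  · exact (h x hx h0).le

lemma PosOn.nonnegOn {A : Matrix ι ι ℝ} {W} (h : PosOn A W) : NonnegOn A W := by
  intro x hx
  by_cases h0 : x = 0
  · simp [h0]
  · exact (h x hx h0).le

lemma dim_bound {A : Matrix ι ι ℝ} {W U : Submodule ℝ (ι → ℝ)}
    (hW : PosOn A W) (hU : NonposOn A U) :
    finrank ℝ W + finrank ℝ U ≤ Fintype.card ι := by
  have hdisj : W ⊓ U = ⊥ := by
    rw [eq_bot_iff]
    intro x hx
    rw [Submodule.mem_bot]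
    by_contra h0
    exact absurd (hU x hx.2) (not_le.2 (hW x hx.1 h0))
  have h1 := Submodule.finrank_sup_add_finrank_inf_eq W U
  rw [hdisj, finrank_bot, add_zero] at h1
  calc finrank ℝ W + finrank ℝ U = finrank ℝ ↥(W ⊔ U) := h1.symm
    _ ≤ finrank ℝ (ι → ℝ) := Submodule.finrank_le _
    _ = Fintype.card ι := by simp [Module.finrank_pi]

lemma QF_neg (A : Matrix ι ι ℝ) (x : ι → ℝ) : QF (-A) x = - QF A x := by
  simp [QF, Matrix.neg_mulVec]

lemma dim_bound' {A : Matrix ι ι ℝ} {W U : Submodule ℝ (ι → ℝ)}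
    (hW : NegOn A W) (hU : NonnegOn A U) :
    finrank ℝ W + finrank ℝ U ≤ Fintype.card ι := by
  refine dim_bound (A := -A) ?_ ?_
  · intro x hx h0; rw [QF_neg]; linarith [hW x hx h0]
  · intro x hx; rw [QF_neg]; linarith [hU x hx]

section Eigen

variable {A : Matrix ι ι ℝ} (hA : A.IsHermitian)

/-- The orthonormal eigenvectors of a real symmetric matrix, as plain functions. -/
noncomputable def evec (i : ι) : ι → ℝ := ⇑(hA.eigenvectorBasis i)

lemma evec_dot (i j : ι) : evec hA i ⬝ᵥ evec hA j = if i = j then 1 else 0 := by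
  have h := hA.eigenvectorBasis.orthonormal
  rw [orthonormal_iff_ite] at h
  have h2 := h i j
  rw [← h2]
  simp [PiLp.inner_apply, dotProduct, evec, mul_comm]

lemma evec_repr (x : ι → ℝ) : x = ∑ i, (evec hA i ⬝ᵥ x) • evec hA i := by
  have h := (hA.eigenvectorBasis.sum_repr' (WithLp.toLp 2 x : EuclideanSpace ℝ ι))
  have h2 : ∀ i, (inner ℝ (hA.eigenvectorBasis i) (WithLp.toLp 2 x : EuclideanSpace ℝ ι) : ℝ)
      = evec hA i ⬝ᵥ x := by
    intro i; simp [PiLp.inner_apply, dotProduct, evec, mul_comm]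
  simp_rw [h2] at h
  have h3 := congrArg (WithLp.ofLp (p := 2)) h
  simpa [evec] using h3.symm

lemma evec_mulVec (i : ι) : A *ᵥ evec hA i = hA.eigenvalues i • evec hA i :=
  hA.mulVec_eigenvectorBasis i

lemma evec_li : LinearIndependent ℝ (evec hA) := by
  rw [Fintype.linearIndependent_iff]
  intro g hg j
  have h := congrArg (fun y => evec hA j ⬝ᵥ y) hg
  simpa [dot_sum, dotProduct_smul, evec_dot, Finset.sum_ite_eq', Finset.mem_univ] using h

/-- The span of the eigenvectors indexed by `s`. -/
noncomputable def eigSpan (s : Finset ι) : Submodule ℝ (ι → ℝ) :=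
  span ℝ (evec hA '' ↑s)

lemma eigSpan_coeff {s : Finset ι} {x : ι → ℝ} (hx : x ∈ eigSpan hA s)
    {j : ι} (hj : j ∉ s) : evec hA j ⬝ᵥ x = 0 := by
  induction hx using Submodule.span_induction with
  | mem y hy =>
    obtain ⟨i, hi, rfl⟩ := hy
    rw [evec_dot, if_neg]
    rintro rfl; exact hj hi
  | zero => simp
  | add y z _ _ hy hz => rw [dotProduct_add, hy, hz, add_zero]
  | smul c y _ hy => rw [dotProduct_smul, hy, smul_zero]

lemma eigSpan_repr {s : Finset ι} {x : ι → ℝ} (hx : x ∈ eigSpan hA s) :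
    x = ∑ i ∈ s, (evec hA i ⬝ᵥ x) • evec hA i := by
  conv_lhs => rw [evec_repr hA x]
  exact (Finset.sum_subset (Finset.subset_univ s) (fun i _ hi => by
    rw [eigSpan_coeff hA hx hi, zero_smul])).symm

lemma eigSpan_QF {s : Finset ι} {x : ι → ℝ} (hx : x ∈ eigSpan hA s) :
    QF A x = ∑ i ∈ s, hA.eigenvalues i * (evec hA i ⬝ᵥ x) ^ 2 := by
  have hAx : A *ᵥ x = ∑ i ∈ s, ((evec hA i ⬝ᵥ x) * hA.eigenvalues i) • evec hA i := by
    conv_lhs => rw [eigSpan_repr hA hx]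
    rw [mulVec_sum']
    simp only [Matrix.mulVec_smul, evec_mulVec, smul_smul]
  have : QF A x = x ⬝ᵥ (A *ᵥ x) := rfl
  rw [this, hAx, dot_sum]
  refine Finset.sum_congr rfl (fun i hi => ?_)
  rw [dotProduct_smul, dotProduct_comm, smul_eq_mul]
  ring

lemma eigSpan_finrank (s : Finset ι) : finrank ℝ (eigSpan hA s) = s.card := by
  have li : LinearIndependent ℝ (fun i : s => evec hA i) :=
    (evec_li hA).comp _ Subtype.val_injective
  have hset : evec hA '' ↑s = Set.range fun i : s => evec hA i := by
    ext y
    constructor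
    · rintro ⟨i, hi, rfl⟩; exact ⟨⟨i, hi⟩, rfl⟩
    · rintro ⟨⟨i, hi⟩, rfl⟩; exact ⟨i, hi, rfl⟩
  rw [eigSpan, hset, finrank_span_eq_card li, Fintype.card_coe]

lemma exists_posOn :
    ∃ W : Submodule ℝ (ι → ℝ), finrank ℝ W = (Finset.univ.filter fun i => 0 < hA.eigenvalues i).card ∧
      PosOn A W := by
  classical
  set s : Finset ι := Finset.univ.filter fun i => 0 < hA.eigenvalues i with hs
  refine ⟨eigSpan hA s, eigSpan_finrank hA s, ?_⟩
  intro x hx h0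
  rw [eigSpan_QF hA hx]
  have hc : ∃ i ∈ s, evec hA i ⬝ᵥ x ≠ 0 := by
    by_contra hcon
    push_neg at hcon
    apply h0
    rw [eigSpan_repr hA hx]
    exact Finset.sum_eq_zero fun i hi => by rw [hcon i hi, zero_smul]
  obtain ⟨i, hi, hci⟩ := hc
  refine Finset.sum_pos' (fun j hj => ?_) ⟨i, hi, ?_⟩
  · have : 0 < hA.eigenvalues j := by simpa [hs] using hj
    positivity
  · have h1 : 0 < hA.eigenvalues i := by simpa [hs] using hi
    have h2 : 0 < (evec hA i ⬝ᵥ x) ^ 2 := by positivity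
    positivity

lemma exists_negOn :
    ∃ W : Submodule ℝ (ι → ℝ), finrank ℝ W = (Finset.univ.filter fun i => hA.eigenvalues i < 0).card ∧
      NegOn A W := by
  classical
  set s : Finset ι := Finset.univ.filter fun i => hA.eigenvalues i < 0 with hs
  refine ⟨eigSpan hA s, eigSpan_finrank hA s, ?_⟩
  intro x hx h0
  rw [eigSpan_QF hA hx]
  have hc : ∃ i ∈ s, evec hA i ⬝ᵥ x ≠ 0 := by
    by_contra hcon
    push_neg at hcon
    apply h0
    rw [eigSpan_repr hA hx]
    exact Finset.sum_eq_zero fun i hi => by rw [hcon i hi, zero_smul]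
  obtain ⟨i, hi, hci⟩ := hc
  have : 0 < ∑ j ∈ s, (- hA.eigenvalues j) * (evec hA j ⬝ᵥ x) ^ 2 := by
    refine Finset.sum_pos' (fun j hj => ?_) ⟨i, hi, ?_⟩
    · have : hA.eigenvalues j < 0 := by simpa [hs] using hj
      have h2 : 0 ≤ (evec hA j ⬝ᵥ x) ^ 2 := sq_nonneg _
      nlinarith
    · have h1 : hA.eigenvalues i < 0 := by simpa [hs] using hi
      have h2 : 0 < (evec hA i ⬝ᵥ x) ^ 2 := by positivity
      nlinarith
  have hsum : ∑ j ∈ s, (- hA.eigenvalues j) * (evec hA j ⬝ᵥ x) ^ 2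
      = - ∑ j ∈ s, hA.eigenvalues j * (evec hA j ⬝ᵥ x) ^ 2 := by
    rw [← Finset.sum_neg_distrib]
    exact Finset.sum_congr rfl fun j _ => by ring
  rw [hsum] at this
  linarith

lemma exists_nonposOn :
    ∃ U : Submodule ℝ (ι → ℝ), finrank ℝ U + (Finset.univ.filter fun i => 0 < hA.eigenvalues i).card
        = Fintype.card ι ∧ NonposOn A U := by
  classical
  set s : Finset ι := Finset.univ.filter fun i => ¬ 0 < hA.eigenvalues i with hs
  refine ⟨eigSpan hA s, ?_, ?_⟩
  · rw [eigSpan_finrank hA s, hs, add_comm,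
      Finset.card_filter_add_card_filter_not (p := fun i => 0 < hA.eigenvalues i)]
    exact Finset.card_univ
  · intro x hx
    rw [eigSpan_QF hA hx]
    refine Finset.sum_nonpos fun j hj => ?_
    have h1 : hA.eigenvalues j ≤ 0 := by
      have := (Finset.mem_filter.1 (hs ▸ hj)).2
      linarith [not_lt.1 this]
    have h2 : 0 ≤ (evec hA j ⬝ᵥ x) ^ 2 := sq_nonneg _
    nlinarith

lemma exists_nonnegOn :
    ∃ U : Submodule ℝ (ι → ℝ), finrank ℝ U + (Finset.univ.filter fun i => hA.eigenvalues i < 0).card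
        = Fintype.card ι ∧ NonnegOn A U := by
  classical
  set s : Finset ι := Finset.univ.filter fun i => ¬ hA.eigenvalues i < 0 with hs
  refine ⟨eigSpan hA s, ?_, ?_⟩
  · rw [eigSpan_finrank hA s, hs, add_comm,
      Finset.card_filter_add_card_filter_not (p := fun i => hA.eigenvalues i < 0)]
    exact Finset.card_univ
  · intro x hx
    rw [eigSpan_QF hA hx]
    refine Finset.sum_nonneg fun j hj => ?_
    have h1 : 0 ≤ hA.eigenvalues j := by
      have := (Finset.mem_filter.1 (hs ▸ hj)).2
      linarith [not_lt.1 this]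
    have h2 : 0 ≤ (evec hA j ⬝ᵥ x) ^ 2 := sq_nonneg _
    nlinarith

lemma posOn_le {W : Submodule ℝ (ι → ℝ)} (hW : PosOn A W) :
    finrank ℝ W ≤ (Finset.univ.filter fun i => 0 < hA.eigenvalues i).card := by
  obtain ⟨U, hU1, hU2⟩ := exists_nonposOn hA
  have := dim_bound hW hU2
  omega

lemma negOn_le {W : Submodule ℝ (ι → ℝ)} (hW : NegOn A W) :
    finrank ℝ W ≤ (Finset.univ.filter fun i => hA.eigenvalues i < 0).card := by
  obtain ⟨U, hU1, hU2⟩ := exists_nonnegOn hA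
  have := dim_bound' hW hU2
  omega

end Eigen

lemma sig_eq {A : Matrix ι ι ℝ} (hA : A.IsHermitian) :
    signature A = ((Finset.univ.filter fun i => 0 < hA.eigenvalues i).card : ℤ) -
      ((Finset.univ.filter fun i => hA.eigenvalues i < 0).card : ℤ) := by
  rw [signature, dif_pos hA]

lemma posOn_map {A : Matrix ι ι ℝ} {B : Matrix κ κ ℝ} (e : (κ → ℝ) ≃ₗ[ℝ] (ι → ℝ))
    (hQ : ∀ x, QF B x = QF A (e x)) {W : Submodule ℝ (κ → ℝ)} (hW : PosOn B W) :
    PosOn A (W.map (e : (κ → ℝ) →ₗ[ℝ] (ι → ℝ))) := by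
  rintro x ⟨y, hy, rfl⟩ h0
  have hy0 : y ≠ 0 := by rintro rfl; simp at h0
  have := hW y hy hy0
  rw [hQ] at this
  exact this

lemma negOn_map {A : Matrix ι ι ℝ} {B : Matrix κ κ ℝ} (e : (κ → ℝ) ≃ₗ[ℝ] (ι → ℝ))
    (hQ : ∀ x, QF B x = QF A (e x)) {W : Submodule ℝ (κ → ℝ)} (hW : NegOn B W) :
    NegOn A (W.map (e : (κ → ℝ) →ₗ[ℝ] (ι → ℝ))) := by
  rintro x ⟨y, hy, rfl⟩ h0
  have hy0 : y ≠ 0 := by rintro rfl; simp at h0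
  have := hW y hy hy0
  rw [hQ] at this
  exact this

lemma cardPos_le_of_equiv {A : Matrix ι ι ℝ} {B : Matrix κ κ ℝ}
    (hA : A.IsHermitian) (hB : B.IsHermitian) (e : (κ → ℝ) ≃ₗ[ℝ] (ι → ℝ))
    (hQ : ∀ x, QF B x = QF A (e x)) :
    (Finset.univ.filter fun i => 0 < hB.eigenvalues i).card ≤
      (Finset.univ.filter fun i => 0 < hA.eigenvalues i).card := by
  obtain ⟨W, hW1, hW2⟩ := exists_posOn hB
  have h := posOn_le hA (posOn_map e hQ hW2)
  rwa [LinearEquiv.finrank_map_eq, hW1] at h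

lemma cardNeg_le_of_equiv {A : Matrix ι ι ℝ} {B : Matrix κ κ ℝ}
    (hA : A.IsHermitian) (hB : B.IsHermitian) (e : (κ → ℝ) ≃ₗ[ℝ] (ι → ℝ))
    (hQ : ∀ x, QF B x = QF A (e x)) :
    (Finset.univ.filter fun i => hB.eigenvalues i < 0).card ≤
      (Finset.univ.filter fun i => hA.eigenvalues i < 0).card := by
  obtain ⟨W, hW1, hW2⟩ := exists_negOn hB
  have h := negOn_le hA (negOn_map e hQ hW2)
  rwa [LinearEquiv.finrank_map_eq, hW1] at h

lemma sig_eq_of_equiv {A : Matrix ι ι ℝ} {B : Matrix κ κ ℝ}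
    (hA : A.IsHermitian) (hB : B.IsHermitian) (e : (κ → ℝ) ≃ₗ[ℝ] (ι → ℝ))
    (hQ : ∀ x, QF B x = QF A (e x)) :
    signature B = signature A := by
  have hQ' : ∀ y, QF A y = QF B (e.symm y) := by
    intro y; rw [hQ (e.symm y), e.apply_symm_apply]
  have h1 := cardPos_le_of_equiv hA hB e hQ
  have h2 := cardPos_le_of_equiv hB hA e.symm hQ'
  have h3 := cardNeg_le_of_equiv hA hB e hQ
  have h4 := cardNeg_le_of_equiv hB hA e.symm hQ'
  rw [sig_eq hA, sig_eq hB]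
  omega

/-! Real symmetric = Hermitian helpers -/

lemma conjT_eq (M : Matrix ι ι ℝ) : Mᴴ = Mᵀ := by
  ext i j
  simp [Matrix.conjTranspose_apply]

lemma herm_iff_symm (M : Matrix ι ι ℝ) : M.IsHermitian ↔ Mᵀ = M := by
  show Mᴴ = M ↔ _
  rw [conjT_eq]

/-! Congruence invariance -/

lemma QF_congr (A P : Matrix ι ι ℝ) (x : ι → ℝ) :
    QF (P * A * Pᵀ) x = QF A (Pᵀ *ᵥ x) := by
  rw [QF, QF, ← Matrix.mulVec_mulVec, ← Matrix.mulVec_mulVec,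
    Matrix.dotProduct_mulVec x P, ← Matrix.mulVec_transpose]

lemma sig_congr (A P : Matrix ι ι ℝ) (hA : A.IsHermitian) (hP : IsUnit P.det) :
    signature (P * A * Pᵀ) = signature A := by
  have hAt : Aᵀ = A := (herm_iff_symm A).1 hA
  have hB : (P * A * Pᵀ).IsHermitian := by
    rw [herm_iff_symm]
    rw [Matrix.transpose_mul, Matrix.transpose_mul, Matrix.transpose_transpose, hAt,
      Matrix.mul_assoc]
  have hPt : IsUnit (Pᵀ).det := by rwa [Matrix.det_transpose]
  have : Invertible Pᵀ := Matrix.invertibleOfIsUnitDet _ hPt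
  refine sig_eq_of_equiv hA hB (Matrix.toLinearEquiv' Pᵀ this) ?_
  intro x
  rw [QF_congr]
  congr 1

lemma sig_reindex (σ : ι ≃ κ) (A : Matrix ι ι ℝ) (hA : A.IsHermitian) :
    signature (Matrix.reindex σ σ A) = signature A := by
  have hB : (Matrix.reindex σ σ A).IsHermitian := by
    rw [herm_iff_symm] at hA ⊢
    rw [Matrix.reindex_apply, Matrix.transpose_submatrix, hA]
  refine sig_eq_of_equiv hA hB (LinearEquiv.funCongrLeft ℝ ℝ σ) ?_
  intro x
  have happ : ∀ y, (LinearEquiv.funCongrLeft ℝ ℝ σ) x y = x (σ y) := fun _ => rfl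
  simp only [QF, dotProduct, Matrix.mulVec, Matrix.reindex_apply, Matrix.submatrix_apply, happ]
  rw [← Equiv.sum_comp σ (fun i => x i * ∑ j, A (σ.symm i) (σ.symm j) * x j)]
  refine Finset.sum_congr rfl fun i _ => ?_
  rw [Equiv.symm_apply_apply]
  congr 1
  rw [← Equiv.sum_comp σ (fun j => A i (σ.symm j) * x j)]
  refine Finset.sum_congr rfl fun j _ => ?_
  rw [Equiv.symm_apply_apply]

/-! Block sums -/

/-- Extension by zero on the left summand. -/
def inlL : (ι → ℝ) →ₗ[ℝ] (ι ⊕ κ → ℝ) where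
  toFun x := Sum.elim x 0
  map_add' x y := by funext s; cases s <;> simp
  map_smul' c x := by funext s; cases s <;> simp

/-- Extension by zero on the right summand. -/
def inrL : (κ → ℝ) →ₗ[ℝ] (ι ⊕ κ → ℝ) where
  toFun x := Sum.elim 0 x
  map_add' x y := by funext s; cases s <;> simp
  map_smul' c x := by funext s; cases s <;> simp

lemma inlL_inj : Function.Injective (inlL (ι := ι) (κ := κ)) := by
  intro x y h
  funext i
  exact congrFun h (Sum.inl i)

lemma inrL_inj : Function.Injective (inrL (ι := ι) (κ := κ)) := by
  intro x y h
  funext i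
  exact congrFun h (Sum.inr i)

lemma QF_fromBlocks (A : Matrix ι ι ℝ) (B : Matrix κ κ ℝ) (x : ι ⊕ κ → ℝ) :
    QF (Matrix.fromBlocks A 0 0 B) x = QF A (x ∘ Sum.inl) + QF B (x ∘ Sum.inr) := by
  have hx : x = Sum.elim (x ∘ Sum.inl) (x ∘ Sum.inr) := by
    funext s; cases s <;> rfl
  rw [QF, hx, Matrix.fromBlocks_mulVec]
  simp only [Matrix.zero_mulVec, add_zero, zero_add]
  rw [sumElim_dotProduct_sumElim]
  rfl

lemma mem_blockSub {W₁ : Submodule ℝ (ι → ℝ)} {W₂ : Submodule ℝ (κ → ℝ)} {x : ι ⊕ κ → ℝ}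
    (hx : x ∈ W₁.map inlL ⊔ W₂.map inrL) :
    x ∘ Sum.inl ∈ W₁ ∧ x ∘ Sum.inr ∈ W₂ := by
  rw [Submodule.mem_sup] at hx
  obtain ⟨a, ha, b, hb, rfl⟩ := hx
  obtain ⟨w, hw, rfl⟩ := ha
  obtain ⟨u, hu, rfl⟩ := hb
  constructor
  · have : (inlL w + inrL u) ∘ Sum.inl = w := by funext i; simp [inlL, inrL]
    rwa [this]
  · have : (inlL w + inrL u) ∘ Sum.inr = u := by funext i; simp [inlL, inrL]
    rwa [this]

lemma blockSub_finrank (W₁ : Submodule ℝ (ι → ℝ)) (W₂ : Submodule ℝ (κ → ℝ)) :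
    finrank ℝ ↥(W₁.map inlL ⊔ W₂.map inrL) = finrank ℝ W₁ + finrank ℝ W₂ := by
  have hinf : W₁.map inlL ⊓ W₂.map inrL = ⊥ := by
    rw [eq_bot_iff]
    rintro x ⟨⟨w, _, rfl⟩, ⟨u, _, hu⟩⟩
    rw [Submodule.mem_bot]
    funext s
    cases s with
    | inl i => exact (congrFun hu (Sum.inl i)).symm
    | inr j => rfl
  have h1 := Submodule.finrank_sup_add_finrank_inf_eq (W₁.map inlL) (W₂.map inrL)
  rw [hinf, finrank_bot, add_zero] at h1
  rw [h1]
  congr 1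
  · exact (LinearEquiv.finrank_eq (Submodule.equivMapOfInjective _ inlL_inj W₁)).symm
  · exact (LinearEquiv.finrank_eq (Submodule.equivMapOfInjective _ inrL_inj W₂)).symm

lemma ne_zero_parts {x : ι ⊕ κ → ℝ} (hx : x ≠ 0) :
    x ∘ Sum.inl ≠ 0 ∨ x ∘ Sum.inr ≠ 0 := by
  by_contra h
  push_neg at h
  apply hx
  funext s
  cases s with
  | inl i => exact congrFun h.1 i
  | inr j => exact congrFun h.2 j

lemma posOn_block {A : Matrix ι ι ℝ} {B : Matrix κ κ ℝ}
    {W₁ : Submodule ℝ (ι → ℝ)} {W₂ : Submodule ℝ (κ → ℝ)}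
    (h₁ : PosOn A W₁) (h₂ : PosOn B W₂) :
    PosOn (Matrix.fromBlocks A 0 0 B) (W₁.map inlL ⊔ W₂.map inrL) := by
  intro x hx h0
  obtain ⟨hm1, hm2⟩ := mem_blockSub hx
  rw [QF_fromBlocks]
  have n1 := h₁.nonnegOn _ hm1
  have n2 := h₂.nonnegOn _ hm2
  rcases ne_zero_parts h0 with h | h
  · linarith [h₁ _ hm1 h]
  · linarith [h₂ _ hm2 h]

lemma negOn_block {A : Matrix ι ι ℝ} {B : Matrix κ κ ℝ}
    {W₁ : Submodule ℝ (ι → ℝ)} {W₂ : Submodule ℝ (κ → ℝ)}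
    (h₁ : NegOn A W₁) (h₂ : NegOn B W₂) :
    NegOn (Matrix.fromBlocks A 0 0 B) (W₁.map inlL ⊔ W₂.map inrL) := by
  intro x hx h0
  obtain ⟨hm1, hm2⟩ := mem_blockSub hx
  rw [QF_fromBlocks]
  have n1 := h₁.nonposOn _ hm1
  have n2 := h₂.nonposOn _ hm2
  rcases ne_zero_parts h0 with h | h
  · linarith [h₁ _ hm1 h]
  · linarith [h₂ _ hm2 h]

lemma nonposOn_block {A : Matrix ι ι ℝ} {B : Matrix κ κ ℝ}
    {W₁ : Submodule ℝ (ι → ℝ)} {W₂ : Submodule ℝ (κ → ℝ)}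
    (h₁ : NonposOn A W₁) (h₂ : NonposOn B W₂) :
    NonposOn (Matrix.fromBlocks A 0 0 B) (W₁.map inlL ⊔ W₂.map inrL) := by
  intro x hx
  obtain ⟨hm1, hm2⟩ := mem_blockSub hx
  rw [QF_fromBlocks]
  linarith [h₁ _ hm1, h₂ _ hm2]

lemma nonnegOn_block {A : Matrix ι ι ℝ} {B : Matrix κ κ ℝ}
    {W₁ : Submodule ℝ (ι → ℝ)} {W₂ : Submodule ℝ (κ → ℝ)}
    (h₁ : NonnegOn A W₁) (h₂ : NonnegOn B W₂) :
    NonnegOn (Matrix.fromBlocks A 0 0 B) (W₁.map inlL ⊔ W₂.map inrL) := by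
  intro x hx
  obtain ⟨hm1, hm2⟩ := mem_blockSub hx
  rw [QF_fromBlocks]
  linarith [h₁ _ hm1, h₂ _ hm2]

lemma sig_block {A : Matrix ι ι ℝ} {B : Matrix κ κ ℝ}
    (hA : A.IsHermitian) (hB : B.IsHermitian) :
    signature (Matrix.fromBlocks A 0 0 B) = signature A + signature B := by
  have hM : (Matrix.fromBlocks A 0 0 B).IsHermitian := by
    rw [herm_iff_symm] at hA hB ⊢
    simp only [Matrix.fromBlocks_transpose, Matrix.transpose_zero, hA, hB]
  -- abbreviations
  set pA := (Finset.univ.filter fun i => 0 < hA.eigenvalues i).card with hpA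
  set qA := (Finset.univ.filter fun i => hA.eigenvalues i < 0).card with hqA
  set pB := (Finset.univ.filter fun i => 0 < hB.eigenvalues i).card with hpB
  set qB := (Finset.univ.filter fun i => hB.eigenvalues i < 0).card with hqB
  set pM := (Finset.univ.filter fun i => 0 < hM.eigenvalues i).card with hpM
  set qM := (Finset.univ.filter fun i => hM.eigenvalues i < 0).card with hqM
  have hple : pM ≤ pA + pB := by
    obtain ⟨W, hW1, hW2⟩ := exists_posOn hM
    obtain ⟨UA, hUA1, hUA2⟩ := exists_nonposOn hA
    obtain ⟨UB, hUB1, hUB2⟩ := exists_nonposOn hB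
    have hd := dim_bound hW2 (nonposOn_block hUA2 hUB2)
    rw [blockSub_finrank, hW1, Fintype.card_sum] at hd
    omega
  have hpge : pA + pB ≤ pM := by
    obtain ⟨WA, hWA1, hWA2⟩ := exists_posOn hA
    obtain ⟨WB, hWB1, hWB2⟩ := exists_posOn hB
    have h := posOn_le hM (posOn_block hWA2 hWB2)
    rwa [blockSub_finrank, hWA1, hWB1] at h
  have hqle : qM ≤ qA + qB := by
    obtain ⟨W, hW1, hW2⟩ := exists_negOn hM
    obtain ⟨UA, hUA1, hUA2⟩ := exists_nonnegOn hA
    obtain ⟨UB, hUB1, hUB2⟩ := exists_nonnegOn hB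
    have hd := dim_bound' hW2 (nonnegOn_block hUA2 hUB2)
    rw [blockSub_finrank, hW1, Fintype.card_sum] at hd
    omega
  have hqge : qA + qB ≤ qM := by
    obtain ⟨WA, hWA1, hWA2⟩ := exists_negOn hA
    obtain ⟨WB, hWB1, hWB2⟩ := exists_negOn hB
    have h := negOn_le hM (negOn_block hWA2 hWB2)
    rwa [blockSub_finrank, hWA1, hWB1] at h
  rw [sig_eq hM, sig_eq hA, sig_eq hB, ← hpA, ← hqA, ← hpB, ← hqB, ← hpM, ← hqM]
  omega

/-! The hyperbolic plane -/

lemma hyp_herm : (!![0, 1; 1, 0] : Matrix (Fin 2) (Fin 2) ℝ).IsHermitian := by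
  rw [herm_iff_symm]
  ext i j
  fin_cases i <;> fin_cases j <;> simp

lemma sig_hyp : signature (!![0, 1; 1, 0] : Matrix (Fin 2) (Fin 2) ℝ) = 0 := by
  have hA := hyp_herm
  have hQ : ∀ x : Fin 2 → ℝ, QF (!![0, 1; 1, 0] : Matrix (Fin 2) (Fin 2) ℝ) x
      = 2 * (x 0 * x 1) := by
    intro x
    simp [QF, Matrix.mulVec, dotProduct, Fin.sum_univ_two]
    ring
  have hv1 : (![1, 1] : Fin 2 → ℝ) ≠ 0 := by
    intro h; exact one_ne_zero (congrFun h 0)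
  have hv2 : (![1, -1] : Fin 2 → ℝ) ≠ 0 := by
    intro h; exact one_ne_zero (congrFun h 0)
  have hpos : PosOn (!![0, 1; 1, 0] : Matrix (Fin 2) (Fin 2) ℝ) (span ℝ {![1, 1]}) := by
    intro x hx h0
    obtain ⟨c, rfl⟩ := Submodule.mem_span_singleton.1 hx
    have hc : c ≠ 0 := by rintro rfl; simp at h0
    rw [hQ]
    simp [Matrix.smul_cons]
    positivity
  have hneg : NegOn (!![0, 1; 1, 0] : Matrix (Fin 2) (Fin 2) ℝ) (span ℝ {![1, -1]}) := by
    intro x hx h0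
    obtain ⟨c, rfl⟩ := Submodule.mem_span_singleton.1 hx
    have hc : c ≠ 0 := by rintro rfl; simp at h0
    rw [hQ]
    have : (c • ![(1 : ℝ), -1]) 0 * (c • ![(1 : ℝ), -1]) 1 = -(c ^ 2) := by
      simp; ring
    rw [this]
    have : 0 < c ^ 2 := by positivity
    linarith
  have hr1 : finrank ℝ ↥(span ℝ ({![1, 1]} : Set (Fin 2 → ℝ))) = 1 :=
    finrank_span_singleton hv1
  have hr2 : finrank ℝ ↥(span ℝ ({![1, -1]} : Set (Fin 2 → ℝ))) = 1 :=
    finrank_span_singleton hv2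
  have h1 : 1 ≤ (Finset.univ.filter fun i => 0 < hA.eigenvalues i).card := by
    have := posOn_le hA hpos; omega
  have h2 : 1 ≤ (Finset.univ.filter fun i => hA.eigenvalues i < 0).card := by
    have := negOn_le hA hneg; omega
  have h3 : (Finset.univ.filter fun i => 0 < hA.eigenvalues i).card
      + (Finset.univ.filter fun i => hA.eigenvalues i < 0).card ≤ 2 := by
    obtain ⟨W, hW1, hW2⟩ := exists_posOn hA
    obtain ⟨U, hU1, hU2⟩ := exists_negOn hA
    have := dim_bound hW2 hU2.nonposOn
    rw [hW1, hU1] at this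
    simpa using this
  rw [sig_eq hA]
  omega

/-! Elementary enlargement -/

lemma enlargeM_herm (S : Matrix ι ι ℝ) (hS : S.IsHermitian) (B : Matrix (Fin 2) ι ℝ) :
    (Matrix.fromBlocks S Bᵀ B !![0, 1; 1, 0]).IsHermitian := by
  rw [herm_iff_symm] at hS ⊢
  rw [Matrix.fromBlocks_transpose, hS, Matrix.transpose_transpose,
    (herm_iff_symm _).1 hyp_herm]

lemma sig_enlarge (S : Matrix ι ι ℝ) (hS : S.IsHermitian) (c : ι → ℝ) :
    signature (Matrix.fromBlocks S
      (Matrix.of fun (i : Fin 2) (j : ι) => if i = 0 then c j else 0)ᵀ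
      (Matrix.of fun (i : Fin 2) (j : ι) => if i = 0 then c j else 0)
      (!![0, 1; 1, 0] : Matrix (Fin 2) (Fin 2) ℝ)) = signature S := by
  set B : Matrix (Fin 2) ι ℝ := Matrix.of fun i j => if i = 0 then c j else 0 with hB
  set H : Matrix (Fin 2) (Fin 2) ℝ := !![0, 1; 1, 0] with hH
  set M := Matrix.fromBlocks S Bᵀ B H with hM
  have hMh : M.IsHermitian := enlargeM_herm S hS B
  set P : Matrix (ι ⊕ Fin 2) (ι ⊕ Fin 2) ℝ := Matrix.fromBlocks 1 (-(Bᵀ * H)) 0 1 with hP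
  have hHH : H * H = 1 := by
    ext i j
    fin_cases i <;> fin_cases j <;>
      simp [hH, Matrix.mul_apply, Fin.sum_univ_two, Matrix.one_apply]
  have hBHB : Bᵀ * (H * B) = 0 := by
    ext i j
    have hz : ∀ k : Fin 2, Bᵀ i k * (H * B) k j = 0 := by
      intro k
      fin_cases k <;> simp [hB, hH, Matrix.mul_apply, Fin.sum_univ_two]
    rw [Matrix.mul_apply, Fin.sum_univ_two, hz 0, hz 1, add_zero]
    simp
  have b11 : (1 : Matrix ι ι ℝ) * S + -(Bᵀ * H) * B = S := by
    rw [Matrix.one_mul, Matrix.neg_mul, Matrix.mul_assoc, hBHB]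
    simp
  have b12 : (1 : Matrix ι ι ℝ) * Bᵀ + -(Bᵀ * H) * H = 0 := by
    rw [Matrix.one_mul, Matrix.neg_mul, Matrix.mul_assoc, hHH, Matrix.mul_one]
    simp
  have e1 : P * M = Matrix.fromBlocks S 0 B H := by
    rw [hP, hM, Matrix.fromBlocks_multiply, b11, b12]
    simp only [Matrix.zero_mul, Matrix.one_mul, zero_add]
  have hPt : Pᵀ = Matrix.fromBlocks 1 0 (-(H * B)) 1 := by
    rw [hP, Matrix.fromBlocks_transpose]
    simp only [Matrix.transpose_one, Matrix.transpose_zero, Matrix.transpose_neg,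
      Matrix.transpose_mul, Matrix.transpose_transpose]
    rw [(herm_iff_symm H).1 hyp_herm]
  have c21 : B * (1 : Matrix ι ι ℝ) + H * -(H * B) = 0 := by
    rw [Matrix.mul_one, Matrix.mul_neg, ← Matrix.mul_assoc, hHH, Matrix.one_mul]
    simp
  have e2 : Matrix.fromBlocks S 0 B H * Matrix.fromBlocks 1 0 (-(H * B)) 1
      = Matrix.fromBlocks S 0 0 H := by
    rw [Matrix.fromBlocks_multiply, c21]
    simp
  have key : P * M * Pᵀ = Matrix.fromBlocks S 0 0 H := by
    rw [Matrix.mul_assoc, ← Matrix.mul_assoc, e1, hPt, e2]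
  have hdet : P.det = 1 := by
    rw [hP, Matrix.det_fromBlocks_zero₂₁]
    simp
  have h1 := sig_congr M P hMh (by rw [hdet]; exact isUnit_one)
  rw [key, sig_block hS hyp_herm, sig_hyp, add_zero] at h1
  exact h1.symm

end SigAux

section IntLevel

variable {ι : Type*} [Fintype ι] [DecidableEq ι]

lemma int_map_mul {κ₁ κ₂ κ₃ : Type*} [Fintype κ₁] [Fintype κ₂] [Fintype κ₃]
    [DecidableEq κ₁] [DecidableEq κ₂]
    (M : Matrix κ₁ κ₂ ℤ) (N : Matrix κ₂ κ₃ ℤ) :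
    ((M * N).map (Int.cast : ℤ → ℝ)) = M.map (Int.cast : ℤ → ℝ) * N.map Int.cast := by
  ext i j
  simp [Matrix.mul_apply, Matrix.map_apply]
  rfl

lemma int_symm_herm (V : Matrix ι ι ℤ) :
    ((V + Vᵀ).map (Int.cast : ℤ → ℝ)).IsHermitian := by
  rw [herm_iff_symm, ← Matrix.transpose_map, Matrix.transpose_add,
    Matrix.transpose_transpose, add_comm]

lemma sig_step_unimodular {n : ℕ} (V P : Matrix (Fin n) (Fin n) ℤ)
    (hP : P.det = 1 ∨ P.det = -1) :
    signature ((P * V * Pᵀ + (P * V * Pᵀ)ᵀ).map (Int.cast : ℤ → ℝ))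
      = signature ((V + Vᵀ).map (Int.cast : ℤ → ℝ)) := by
  have hsum : P * V * Pᵀ + (P * V * Pᵀ)ᵀ = P * (V + Vᵀ) * Pᵀ := by
    have ht : (P * V * Pᵀ)ᵀ = P * Vᵀ * Pᵀ := by
      rw [Matrix.transpose_mul, Matrix.transpose_mul, Matrix.transpose_transpose,
        Matrix.mul_assoc]
    rw [ht, Matrix.mul_add, Matrix.add_mul]
  have hmap : ((P * (V + Vᵀ) * Pᵀ).map (Int.cast : ℤ → ℝ))
      = P.map Int.cast * ((V + Vᵀ).map Int.cast) * (P.map (Int.cast : ℤ → ℝ))ᵀ := by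
    rw [int_map_mul, int_map_mul, Matrix.transpose_map]
    rfl
  have hdet : IsUnit (P.map (Int.cast : ℤ → ℝ)).det := by
    have hdet2 : (P.map (Int.cast : ℤ → ℝ)).det = ((P.det : ℤ) : ℝ) :=
      (RingHom.map_det (Int.castRingHom ℝ) P).symm
    rw [hdet2]
    rcases hP with h | h <;> rw [h]
    · simpa using isUnit_one
    · simpa using isUnit_one.neg
  rw [hsum, hmap]
  exact sig_congr _ _ (int_symm_herm V) hdet

lemma reindex_symm_map {n : ℕ} (N : Matrix (Fin n ⊕ Fin 2) (Fin n ⊕ Fin 2) ℤ) :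
    ((Matrix.reindex finSumFinEquiv finSumFinEquiv N)
        + (Matrix.reindex finSumFinEquiv finSumFinEquiv N)ᵀ).map (Int.cast : ℤ → ℝ)
      = Matrix.reindex finSumFinEquiv finSumFinEquiv ((N + Nᵀ).map (Int.cast : ℤ → ℝ)) := by
  ext i j
  simp [Matrix.reindex_apply, Matrix.submatrix_apply]

lemma sig_step_row {n : ℕ} (V : Matrix (Fin n) (Fin n) ℤ) (a : Fin n → ℤ) :
    signature ((rowEnlarge V a + (rowEnlarge V a)ᵀ).map (Int.cast : ℤ → ℝ))
      = signature ((V + Vᵀ).map (Int.cast : ℤ → ℝ)) := by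
  set S : Matrix (Fin n) (Fin n) ℝ := (V + Vᵀ).map (Int.cast : ℤ → ℝ) with hSdef
  set B : Matrix (Fin 2) (Fin n) ℝ :=
    Matrix.of fun i j => if i = 0 then ((a j : ℝ)) else 0 with hBdef
  have hblock : ((rowEnlarge V a + (rowEnlarge V a)ᵀ).map (Int.cast : ℤ → ℝ))
      = Matrix.reindex finSumFinEquiv finSumFinEquiv
          (Matrix.fromBlocks S Bᵀ B !![0, 1; 1, 0]) := by
    rw [rowEnlarge, reindex_symm_map]
    congr 1
    ext i j
    cases i with
    | inl i => cases j with
      | inl j => simp [hSdef]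
      | inr j => simp [hBdef, apply_ite (Int.cast : ℤ → ℝ)]
    | inr i => cases j with
      | inl j => simp [hBdef, apply_ite (Int.cast : ℤ → ℝ)]
      | inr j => fin_cases i <;> fin_cases j <;> simp
  rw [hblock, sig_reindex _ _ (enlargeM_herm S (int_symm_herm V) B)]
  exact sig_enlarge S (int_symm_herm V) (fun j => (a j : ℝ))

lemma sig_step_col {n : ℕ} (V : Matrix (Fin n) (Fin n) ℤ) (b : Fin n → ℤ) :
    signature ((colEnlarge V b + (colEnlarge V b)ᵀ).map (Int.cast : ℤ → ℝ))
      = signature ((V + Vᵀ).map (Int.cast : ℤ → ℝ)) := by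
  set S : Matrix (Fin n) (Fin n) ℝ := (V + Vᵀ).map (Int.cast : ℤ → ℝ) with hSdef
  set B : Matrix (Fin 2) (Fin n) ℝ :=
    Matrix.of fun i j => if i = 0 then ((b j : ℝ)) else 0 with hBdef
  have hblock : ((colEnlarge V b + (colEnlarge V b)ᵀ).map (Int.cast : ℤ → ℝ))
      = Matrix.reindex finSumFinEquiv finSumFinEquiv
          (Matrix.fromBlocks S Bᵀ B !![0, 1; 1, 0]) := by
    rw [colEnlarge, reindex_symm_map]
    congr 1
    ext i j
    cases i with
    | inl i => cases j with
      | inl j => simp [hSdef]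
      | inr j => simp [hBdef, apply_ite (Int.cast : ℤ → ℝ)]
    | inr i => cases j with
      | inl j => simp [hBdef, apply_ite (Int.cast : ℤ → ℝ)]
      | inr j => fin_cases i <;> fin_cases j <;> simp
  rw [hblock, sig_reindex _ _ (enlargeM_herm S (int_symm_herm V) B)]
  exact sig_enlarge S (int_symm_herm V) (fun j => (b j : ℝ))

end IntLevel


/-- If `V₁` and `V₂` are S-equivalent, then `σ(V₂ + V₂ᵀ) = σ(V₁ + V₁ᵀ)`: the signature
of the symmetrization is an invariant of S-equivalence. -/
theorem signature_of_SEquiv {m n : ℕ}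
    (V₁ : Matrix (Fin m) (Fin m) ℤ) (V₂ : Matrix (Fin n) (Fin n) ℤ)
    (h : SEquiv ⟨m, V₁⟩ ⟨n, V₂⟩) :
    signature ((V₂ + V₂ᵀ).map (Int.cast : ℤ → ℝ))
      = signature ((V₁ + V₁ᵀ).map (Int.cast : ℤ → ℝ)) := by
  have key : ∀ x y : (Σ n : ℕ, Matrix (Fin n) (Fin n) ℤ), SStep x y →
      signature ((y.2 + y.2ᵀ).map (Int.cast : ℤ → ℝ))
        = signature ((x.2 + x.2ᵀ).map (Int.cast : ℤ → ℝ)) := by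
    rintro x y hstep
    cases hstep with
    | unimodular V P hP => exact sig_step_unimodular V P hP
    | row V a => exact sig_step_row V a
    | col V b => exact sig_step_col V b
  have main : ∀ x y : (Σ n : ℕ, Matrix (Fin n) (Fin n) ℤ), SEquiv x y →
      signature ((y.2 + y.2ᵀ).map (Int.cast : ℤ → ℝ))
        = signature ((x.2 + x.2ᵀ).map (Int.cast : ℤ → ℝ)) := by
    intro x y h
    induction h with
    | rel a b hab => exact key a b hab
    | refl a => rfl
    | symm a b _ ih => exact ih.symm
    | trans a b c _ _ ih1 ih2 => exact ih2.trans ih1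
  exact main ⟨m, V₁⟩ ⟨n, V₂⟩ h
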